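/- If m ≡ 0 (mod 3) and n is divisible by 3, then γ₂(C_n □ P_m) ≤ n(m+2)/3. In particular, for n = 3 and m ≥ 4, γ₂(C₃ □ P_m) ≤ m + 2. -/

import Mathlib

open SimpleGraph

/-- `S` is a 2-dominating set of `G`: every vertex not in `S` has at least two neighbors in `S`. -/
def TwoDomSet {V : Type*} (G : SimpleGraph V) (S : Set V) : Prop :=
  ∀ v ∉ S, 2 ≤ (S ∩ G.neighborSet v).ncard

/-- The 2-domination number of `G`. -/
noncomputable def gamma2 {V : Type*} (G : SimpleGraph V) : ℕ :=
  sInf {k | ∃ S : Set V, TwoDomSet G S ∧ S.ncard = k}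

/-- The cylinder `C_n □ P_m`. -/
def cylinder (n m : ℕ) : SimpleGraph (Fin n × Fin m) :=
  (cycleGraph n) □ (pathGraph m)

/- auxiliary lemmas -/

lemma val_sub_one_mod3 {k : ℕ} (h3 : 3 ∣ (k + 3)) (i : Fin (k + 3)) :
    ((i - 1 : Fin (k + 3))).val % 3 = (i.val + 2) % 3 := by
  have hi := i.isLt
  have h1 : ((i - 1 : Fin (k + 3))).val = (k + 3 - (1 : Fin (k+3)).val + i.val) % (k + 3) := by
    rw [Fin.sub_def]
  rw [Fin.val_one] at h1
  rcases eq_or_ne i.val 0 with h0 | h0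
  · have : k + 3 - 1 + i.val = k + 2 := by omega
    rw [this, Nat.mod_eq_of_lt (by omega)] at h1
    omega
  · have : k + 3 - 1 + i.val = (k + 3) + (i.val - 1) := by omega
    rw [this, Nat.add_mod_left, Nat.mod_eq_of_lt (by omega)] at h1
    omega

lemma val_add_one_mod3 {k : ℕ} (h3 : 3 ∣ (k + 3)) (i : Fin (k + 3)) :
    ((i + 1 : Fin (k + 3))).val % 3 = (i.val + 1) % 3 := by
  have hi := i.isLt
  have h1 : ((i + 1 : Fin (k + 3))).val = (i.val + (1 : Fin (k+3)).val) % (k + 3) := by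
    rw [Fin.add_def]
  rw [Fin.val_one] at h1
  rcases eq_or_ne i.val (k + 2) with h0 | h0
  · rw [h0, Nat.mod_self] at h1
    omega
  · rw [Nat.mod_eq_of_lt (by omega)] at h1
    omega

lemma filter_range_mod (a r : ℕ) (hr : r < 3) :
    ((Finset.range (3 * a)).filter (fun i => i % 3 = r)).card = a := by
  have h : (Finset.range (3 * a)).filter (fun i => i % 3 = r)
      = (Finset.range a).image (fun k => 3 * k + r) := by
    ext i
    simp only [Finset.mem_filter, Finset.mem_range, Finset.mem_image]
    constructor
    · rintro ⟨h1, h2⟩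
      exact ⟨i / 3, by omega, by omega⟩
    · rintro ⟨k, hk, rfl⟩
      omega
  rw [h, Finset.card_image_of_injective _ (fun x y h => by omega), Finset.card_range]

lemma filter_fin_mod (n r : ℕ) (hn : 3 ∣ n) (hr : r < 3) :
    (Finset.univ.filter (fun i : Fin n => i.val % 3 = r)).card = n / 3 := by
  obtain ⟨a, rfl⟩ := hn
  rw [Finset.card_filter,
    Fin.sum_univ_eq_sum_range (fun i => if i % 3 = r then (1 : ℕ) else 0),
    ← Finset.card_filter, filter_range_mod a r hr]
  omega

lemma main_bound (n m : ℕ) (hn : 3 ≤ n) (hm : 2 ≤ m) (hdn : 3 ∣ n) :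
    gamma2 (cylinder n m) ≤ n * (m + 2) / 3 := by
  obtain ⟨k, rfl⟩ : ∃ k, n = k + 3 := ⟨n - 3, by omega⟩
  obtain ⟨l, rfl⟩ : ∃ l, m = l + 2 := ⟨m - 2, by omega⟩
  -- the 2-dominating set
  set Sfin : Finset (Fin (k+3) × Fin (l+2)) := Finset.univ.filter
    (fun p => p.1.val % 3 = p.2.val % 3 ∨ (p.2.val = 0 ∧ p.1.val % 3 = 2) ∨
      (p.2.val = (l+2) - 1 ∧ p.1.val % 3 = (l+2) % 3)) with hSfin
  have hmemS : ∀ p : Fin (k+3) × Fin (l+2), p ∈ Sfin ↔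
      (p.1.val % 3 = p.2.val % 3 ∨ (p.2.val = 0 ∧ p.1.val % 3 = 2) ∨
      (p.2.val = (l+2) - 1 ∧ p.1.val % 3 = (l+2) % 3)) := by
    intro p
    simp [hSfin]
  have hdom : TwoDomSet (cylinder (k+3) (l+2)) (↑Sfin : Set (Fin (k+3) × Fin (l+2))) := by
    intro v hv
    obtain ⟨i, j⟩ := v
    rw [Finset.mem_coe, hmemS] at hv
    push_neg at hv
    obtain ⟨h1, h2, h3⟩ := hv
    dsimp only at h1 h2 h3
    have hi := i.isLt
    have hj := j.isLt
    rcases eq_or_ne (i.val % 3) ((j.val + 1) % 3) with hc | hc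
    · -- case A : i ≡ j + 1 (mod 3); neighbors (i-1, j) and (i, j+1)
      have hjm : j.val + 1 < l+2 := by
        rcases Nat.lt_or_ge (j.val + 1) (l+2) with h | h
        · exact h
        · exfalso; exact absurd (by omega : i.val % 3 = (l+2) % 3) (h3 (by omega))
      set a : Fin (k+3) × Fin (l+2) := (i - 1, j) with ha
      set b : Fin (k+3) × Fin (l+2) := (i, ⟨j.val + 1, hjm⟩) with hb
      have hane : a ≠ b := by
        intro h
        have := congrArg (fun p => (Prod.snd p).val) h
        simp [ha, hb] at this
      have haS : a ∈ Sfin := by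
        rw [hmemS]
        left
        simp only [ha]
        have := val_sub_one_mod3 hdn i
        omega
      have hbS : b ∈ Sfin := by
        rw [hmemS]
        left
        simpa using hc
      have haN : a ∈ (cylinder (k+3) (l+2)).neighborSet (i, j) := by
        rw [mem_neighborSet]
        exact Or.inl ⟨by rw [cycleGraph_adj]; exact Or.inl (sub_sub_cancel i 1), rfl⟩
      have hbN : b ∈ (cylinder (k+3) (l+2)).neighborSet (i, j) := by
        rw [mem_neighborSet]
        exact Or.inr ⟨by rw [pathGraph_adj]; exact Or.inl rfl, rfl⟩
      have hsub : ({a, b} : Set (Fin (k+3) × Fin (l+2))) ⊆ ↑Sfin ∩ (cylinder (k+3) (l+2)).neighborSet (i, j) := by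
        rintro x (rfl | rfl)
        · exact ⟨haS, haN⟩
        · exact ⟨hbS, hbN⟩
      calc 2 = ({a, b} : Set (Fin (k+3) × Fin (l+2))).ncard := (Set.ncard_pair hane).symm
        _ ≤ _ := Set.ncard_le_ncard hsub (Set.toFinite _)
    · -- case B : i ≡ j + 2 (mod 3); neighbors (i+1, j) and (i, j-1)
      have hc2 : i.val % 3 = (j.val + 2) % 3 := by omega
      have hjm : 1 ≤ j.val := by
        rcases eq_or_ne j.val 0 with h | h
        · exfalso; exact absurd (by omega : i.val % 3 = 2) (h2 h)
        · omega
      set a : Fin (k+3) × Fin (l+2) := (i + 1, j) with ha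
      set b : Fin (k+3) × Fin (l+2) := (i, ⟨j.val - 1, by omega⟩) with hb
      have hane : a ≠ b := by
        intro h
        have := congrArg (fun p => (Prod.snd p).val) h
        simp [ha, hb] at this
        omega
      have haS : a ∈ Sfin := by
        rw [hmemS]
        left
        simp only [ha]
        have := val_add_one_mod3 hdn i
        omega
      have hbS : b ∈ Sfin := by
        rw [hmemS]
        left
        simp only [hb]
        omega
      have haN : a ∈ (cylinder (k+3) (l+2)).neighborSet (i, j) := by
        rw [mem_neighborSet]
        exact Or.inl ⟨by rw [cycleGraph_adj]; exact Or.inr (add_sub_cancel_left i 1), rfl⟩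
      have hbN : b ∈ (cylinder (k+3) (l+2)).neighborSet (i, j) := by
        rw [mem_neighborSet]
        refine Or.inr ⟨by rw [pathGraph_adj]; exact Or.inr (by simp [hb]; omega), rfl⟩
      have hsub : ({a, b} : Set (Fin (k+3) × Fin (l+2))) ⊆ ↑Sfin ∩ (cylinder (k+3) (l+2)).neighborSet (i, j) := by
        rintro x (rfl | rfl)
        · exact ⟨haS, haN⟩
        · exact ⟨hbS, hbN⟩
      calc 2 = ({a, b} : Set (Fin (k+3) × Fin (l+2))).ncard := (Set.ncard_pair hane).symm
        _ ≤ _ := Set.ncard_le_ncard hsub (Set.toFinite _)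
  -- cardinality bound
  have hcard : Sfin.card ≤ (k+3) * ((l+2) + 2) / 3 := by
    have hA : (Finset.univ.filter
        (fun p : Fin (k+3) × Fin (l+2) => p.1.val % 3 = p.2.val % 3)).card = (l+2) * ((k+3) / 3) := by
      rw [Finset.card_filter, Fintype.sum_prod_type_right]
      have : ∀ j : Fin (l+2), (∑ i : Fin (k+3), if i.val % 3 = j.val % 3 then (1:ℕ) else 0) = (k+3) / 3 := by
        intro j
        rw [← Finset.card_filter, filter_fin_mod (k+3) (j.val % 3) hdn (Nat.mod_lt _ (by norm_num))]
      rw [Finset.sum_congr rfl (fun j _ => this j)]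
      simp [mul_comm]
    have hB : (Finset.univ.filter
        (fun p : Fin (k+3) × Fin (l+2) => p.2.val = 0 ∧ p.1.val % 3 = 2)).card ≤ (k+3) / 3 := by
      rw [← filter_fin_mod (k+3) 2 hdn (by norm_num)]
      apply Finset.card_le_card_of_injOn (fun p => p.1)
      · intro p hp
        simp only [Finset.mem_coe, Finset.mem_filter, Finset.mem_univ, true_and] at hp ⊢
        exact hp.2
      · intro p hp q hq h
        simp only [Finset.mem_coe, Finset.mem_filter, Finset.mem_univ, true_and] at hp hq
        exact Prod.ext h (Fin.ext (hp.1.trans hq.1.symm))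
    have hC : (Finset.univ.filter
        (fun p : Fin (k+3) × Fin (l+2) => p.2.val = (l+2) - 1 ∧ p.1.val % 3 = (l+2) % 3)).card ≤ (k+3) / 3 := by
      rw [← filter_fin_mod (k+3) ((l+2) % 3) hdn (Nat.mod_lt _ (by norm_num))]
      apply Finset.card_le_card_of_injOn (fun p => p.1)
      · intro p hp
        simp only [Finset.mem_coe, Finset.mem_filter, Finset.mem_univ, true_and] at hp ⊢
        exact hp.2
      · intro p hp q hq h
        simp only [Finset.mem_coe, Finset.mem_filter, Finset.mem_univ, true_and] at hp hq
        exact Prod.ext h (Fin.ext (hp.1.trans hq.1.symm))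
    have hsub : Sfin ⊆ (Finset.univ.filter
          (fun p : Fin (k+3) × Fin (l+2) => p.1.val % 3 = p.2.val % 3)) ∪
        ((Finset.univ.filter
          (fun p : Fin (k+3) × Fin (l+2) => p.2.val = 0 ∧ p.1.val % 3 = 2)) ∪
        (Finset.univ.filter
          (fun p : Fin (k+3) × Fin (l+2) => p.2.val = (l+2) - 1 ∧ p.1.val % 3 = (l+2) % 3))) := by
      intro p hp
      rw [hmemS] at hp
      simp only [Finset.mem_union, Finset.mem_filter, Finset.mem_univ, true_and]
      tauto
    obtain ⟨a, hna⟩ := hdn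
    have h3a : (k+3) / 3 = a := by omega
    have hrhs : (k+3) * ((l+2) + 2) / 3 = a * ((l+2) + 2) := by
      rw [hna, mul_assoc, Nat.mul_div_cancel_left _ (by norm_num : 0 < 3)]
    calc Sfin.card ≤ _ := Finset.card_le_card hsub
      _ ≤ _ := Finset.card_union_le _ _
      _ ≤ _ + _ := Nat.add_le_add_left (Finset.card_union_le _ _) _
      _ ≤ (l+2) * ((k+3) / 3) + ((k+3) / 3 + (k+3) / 3) := by
          exact Nat.add_le_add (le_of_eq hA) (Nat.add_le_add hB hC)
      _ = a * ((l+2) + 2) := by rw [h3a]; ring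
      _ = (k+3) * ((l+2) + 2) / 3 := hrhs.symm
  have hmem : Sfin.card ∈ {c | ∃ S : Set (Fin (k+3) × Fin (l+2)),
      TwoDomSet (cylinder (k+3) (l+2)) S ∧ S.ncard = c} :=
    ⟨↑Sfin, hdom, Set.ncard_coe_finset _⟩
  exact le_trans (Nat.sInf_le hmem) hcard

theorem gamma2_upper_bound :
    (∀ n m : ℕ, 3 ≤ n → 2 ≤ m → 3 ∣ n → 3 ∣ m →
        gamma2 (cylinder n m) ≤ n * (m + 2) / 3) ∧
      ∀ m : ℕ, 4 ≤ m → gamma2 (cylinder 3 m) ≤ m + 2 := by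
  constructor
  · intro n m hn hm hdn _
    exact main_bound n m hn hm hdn
  · intro m hm
    have := main_bound 3 m (by norm_num) (by omega) ⟨1, rfl⟩
    have h : 3 * (m + 2) / 3 = m + 2 := by omega
    omega
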